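/- Let α : [0,T) → ℝ be continuously differentiable with α(t) > 0 and α'(t) ≤ 0 for all t. Let ρ₀ solve ρ₀'' + α ρ₀ = 0 with ρ₀(0)=1, ρ₀'(0)=0. Then for all t ∈ [0,T): |ρ₀(t)| ≤ √(α(0)/α(t)) and |ρ₀'(t)| ≤ √(α(0)). -/

import Mathlib

/-- Energy bound for the solution ρ₀ of ρ'' + α ρ = 0 with ρ₀(0)=1, ρ₀'(0)=0,
when α > 0 and α' ≤ 0. -/
theorem stmt_1 (T : ℝ) (hT : 0 < T) (α α' ρ₀ ρ₀' : ℝ → ℝ)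
    (hα : ∀ t ∈ Set.Ico (0:ℝ) T, HasDerivAt α (α' t) t)
    (hαpos : ∀ t ∈ Set.Ico (0:ℝ) T, 0 < α t)
    (hα' : ∀ t ∈ Set.Ico (0:ℝ) T, α' t ≤ 0)
    (hρ₀ : ∀ t ∈ Set.Ico (0:ℝ) T, HasDerivAt ρ₀ (ρ₀' t) t)
    (hρ₀' : ∀ t ∈ Set.Ico (0:ℝ) T, HasDerivAt ρ₀' (-(α t * ρ₀ t)) t)
    (h00 : ρ₀ 0 = 1) (h01 : ρ₀' 0 = 0) :
    ∀ t ∈ Set.Ico (0:ℝ) T,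
      |ρ₀ t| ≤ Real.sqrt (α 0 / α t) ∧ |ρ₀' t| ≤ Real.sqrt (α 0) := by
  set E : ℝ → ℝ := fun t => (ρ₀' t) ^ 2 + α t * (ρ₀ t) ^ 2 with hE
  have hEderiv : ∀ t ∈ Set.Ico (0:ℝ) T, HasDerivAt E (α' t * (ρ₀ t) ^ 2) t := by
    intro t ht
    have h1 := ((hρ₀' t ht).pow 2).add
      (((hα t ht).mul ((hρ₀ t ht).pow 2)))
    convert h1 using 1
    · rfl
    · rfl
    · rfl
    · simp only [Pi.pow_apply]; ring
  have hconv : Convex ℝ (Set.Ico (0:ℝ) T) := convex_Ico 0 T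
  have hcont : ContinuousOn E (Set.Ico 0 T) := fun t ht =>
    ((hEderiv t ht).continuousAt).continuousWithinAt
  have hmono : AntitoneOn E (Set.Ico 0 T) := by
    apply antitoneOn_of_deriv_nonpos hconv hcont
    · intro t ht
      rw [interior_Ico] at ht
      exact ((hEderiv t ⟨le_of_lt ht.1, ht.2⟩).differentiableAt).differentiableWithinAt
    · intro t ht
      rw [interior_Ico] at ht
      have ht' : t ∈ Set.Ico (0:ℝ) T := ⟨le_of_lt ht.1, ht.2⟩
      rw [(hEderiv t ht').deriv]
      exact mul_nonpos_of_nonpos_of_nonneg (hα' t ht') (sq_nonneg _)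
  intro t ht
  have h0mem : (0:ℝ) ∈ Set.Ico (0:ℝ) T := ⟨le_refl 0, hT⟩
  have hle : E t ≤ E 0 := hmono h0mem ht ht.1
  simp only [hE, h00, h01] at hle
  have hE0 : E 0 = α 0 := by simp [hE, h00, h01]
  have hαt := hαpos t ht
  have hα0 : 0 < α 0 := hαpos 0 h0mem
  have h1 : α t * (ρ₀ t) ^ 2 ≤ α 0 := by
    have := sq_nonneg (ρ₀' t)
    linarith [hle, hE0]
  have h2 : (ρ₀' t) ^ 2 ≤ α 0 := by
    have : 0 ≤ α t * (ρ₀ t) ^ 2 := mul_nonneg hαt.le (sq_nonneg _)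
    linarith [hle, hE0]
  constructor
  · have : (ρ₀ t) ^ 2 ≤ α 0 / α t := by
      rw [le_div_iff₀ hαt]; linarith [h1]
    calc |ρ₀ t| = Real.sqrt ((ρ₀ t) ^ 2) := (Real.sqrt_sq_eq_abs _).symm
      _ ≤ Real.sqrt (α 0 / α t) := Real.sqrt_le_sqrt this
  · calc |ρ₀' t| = Real.sqrt ((ρ₀' t) ^ 2) := (Real.sqrt_sq_eq_abs _).symm
      _ ≤ Real.sqrt (α 0) := Real.sqrt_le_sqrt h2
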